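/- The function D₂ defined on the set of all linear subspaces of ℝ^n (of arbitrary dimension ≥ 1) by D₂(𝒳,𝒴) = sqrt(max(p,q) − ‖XᵀY‖_F²), where X, Y are orthonormal bases of 𝒳, 𝒴 of dimensions p, q, is a metric: it is nonnegative, vanishes iff 𝒳 = 𝒴, is symmetric, and satisfies the triangle inequality. Moreover its value is independent of the choice of orthonormal bases. -/

import Mathlib

open Matrix

/-- A matrix has orthonormal columns. -/
def hasOrthonormalCols {n p : ℕ} (X : Matrix (Fin n) (Fin p) ℝ) : Prop := Xᵀ * X = 1

/-- Squared Frobenius norm: ‖A‖_F² = tr(AᵀA). -/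
noncomputable def frobSq {a b : ℕ} (A : Matrix (Fin a) (Fin b) ℝ) : ℝ := (Aᵀ * A).trace

/-- Frobenius norm. -/
noncomputable def frob {a b : ℕ} (A : Matrix (Fin a) (Fin b) ℝ) : ℝ := Real.sqrt (frobSq A)

lemma hermMMt {a b : ℕ} (M : Matrix (Fin a) (Fin b) ℝ) : (M * Mᵀ).IsHermitian := by
  simpa [Matrix.conjTranspose_eq_transpose_of_trivial] using
    Matrix.isHermitian_mul_conjTranspose_self M

lemma hermMtM {a b : ℕ} (M : Matrix (Fin a) (Fin b) ℝ) : (Mᵀ * M).IsHermitian := by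
  simpa [Matrix.conjTranspose_eq_transpose_of_trivial] using
    Matrix.isHermitian_conjTranspose_mul_self M

/-- The singular values of a matrix `M`, as square roots of the eigenvalues of the
smaller of the Gram matrices `M Mᵀ` and `Mᵀ M`; there are `min a b` of them. -/
noncomputable def singVals {a b : ℕ} (M : Matrix (Fin a) (Fin b) ℝ) :
    Fin (min a b) → ℝ :=
  if a ≤ b then
    fun k => Real.sqrt ((hermMMt M).eigenvalues (Fin.castLE (Nat.min_le_left a b) k))
  else
    fun k => Real.sqrt ((hermMtM M).eigenvalues (Fin.castLE (Nat.min_le_right a b) k))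

/-- Subspace distance D₂. -/
noncomputable def D2 {n p q : ℕ} (X : Matrix (Fin n) (Fin p) ℝ)
    (Y : Matrix (Fin n) (Fin q) ℝ) : ℝ :=
  Real.sqrt (max (p : ℝ) (q : ℝ) - frobSq (Xᵀ * Y))

/-- Principal-angle distance D₁ = ‖arccos σ(XᵀY)‖₂. -/
noncomputable def D1 {n p q : ℕ} (X : Matrix (Fin n) (Fin p) ℝ)
    (Y : Matrix (Fin n) (Fin q) ℝ) : ℝ :=
  Real.sqrt (∑ k, (Real.arccos (singVals (Xᵀ * Y) k)) ^ 2)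

section Aux
open Matrix

lemma frobSq_eq_sum' {a b : ℕ} (M : Matrix (Fin a) (Fin b) ℝ) :
    frobSq M = ∑ j, ∑ i, (M i j)^2 := by
  simp [frobSq, Matrix.trace, Matrix.diag, Matrix.mul_apply, sq]

lemma frobSq_nonneg' {a b : ℕ} (M : Matrix (Fin a) (Fin b) ℝ) : 0 ≤ frobSq M := by
  rw [frobSq_eq_sum']
  positivity

lemma frobSq_eq_zero_iff {a b : ℕ} (M : Matrix (Fin a) (Fin b) ℝ) :
    frobSq M = 0 ↔ M = 0 := by
  rw [frobSq_eq_sum']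
  constructor
  · intro h
    ext i j
    have h1 : ∀ j ∈ Finset.univ, (0:ℝ) ≤ ∑ i, (M i j)^2 := by
      intro j _; positivity
    have h2 := (Finset.sum_eq_zero_iff_of_nonneg h1).mp h j (Finset.mem_univ j)
    have h3 : ∀ i ∈ Finset.univ, (0:ℝ) ≤ (M i j)^2 := by intro i _; positivity
    have h4 := (Finset.sum_eq_zero_iff_of_nonneg h3).mp h2 i (Finset.mem_univ i)
    simpa [pow_eq_zero_iff] using h4
  · intro h; subst h
    refine Finset.sum_eq_zero fun j _ => Finset.sum_eq_zero fun i _ => ?_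
    simp

lemma frobSq_transpose {a b : ℕ} (M : Matrix (Fin a) (Fin b) ℝ) :
    frobSq Mᵀ = frobSq M := by
  rw [frobSq, frobSq, Matrix.transpose_transpose, Matrix.trace_mul_comm]

/-- Projection matrix facts. -/
lemma proj_symm {n p : ℕ} (X : Matrix (Fin n) (Fin p) ℝ) : (X * Xᵀ)ᵀ = X * Xᵀ := by
  rw [Matrix.transpose_mul, Matrix.transpose_transpose]

lemma proj_trace {n p : ℕ} (X : Matrix (Fin n) (Fin p) ℝ) (hX : hasOrthonormalCols X) :
    (X * Xᵀ).trace = (p : ℝ) := by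
  rw [Matrix.trace_mul_comm, hX, Matrix.trace_one]
  simp

lemma proj_mul_self {n p : ℕ} (X : Matrix (Fin n) (Fin p) ℝ) (hX : hasOrthonormalCols X) :
    (X * Xᵀ) * X = X := by
  rw [Matrix.mul_assoc, hX, Matrix.mul_one]

lemma frobSq_cross {n p q : ℕ} (X : Matrix (Fin n) (Fin p) ℝ) (Y : Matrix (Fin n) (Fin q) ℝ) :
    frobSq (Xᵀ * Y) = ((X * Xᵀ) * (Y * Yᵀ)).trace := by
  rw [frobSq, Matrix.transpose_mul, Matrix.transpose_transpose]
  rw [Matrix.mul_assoc, Matrix.trace_mul_comm]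
  simp only [Matrix.mul_assoc]

lemma frobSq_proj_sub {n p q : ℕ} (X : Matrix (Fin n) (Fin p) ℝ) (Y : Matrix (Fin n) (Fin q) ℝ)
    (hX : hasOrthonormalCols X) (hY : hasOrthonormalCols Y) :
    frobSq (X * Xᵀ - Y * Yᵀ) = (p : ℝ) + (q : ℝ) - 2 * frobSq (Xᵀ * Y) := by
  set P := X * Xᵀ with hP
  set Q := Y * Yᵀ with hQ
  have hPt : (P - Q)ᵀ = P - Q := by
    rw [Matrix.transpose_sub, proj_symm, proj_symm]
  rw [frobSq, hPt]
  have expand : (P - Q) * (P - Q) = P * P - P * Q - Q * P + Q * Q := by noncomm_ring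
  rw [expand]
  have hPP : P * P = P := by rw [hP, Matrix.mul_assoc, ← Matrix.mul_assoc Xᵀ, hX, Matrix.one_mul]
  have hQQ : Q * Q = Q := by rw [hQ, Matrix.mul_assoc, ← Matrix.mul_assoc Yᵀ, hY, Matrix.one_mul]
  rw [hPP, hQQ, Matrix.trace_add, Matrix.trace_sub, Matrix.trace_sub,
    proj_trace X hX, proj_trace Y hY, Matrix.trace_mul_comm Q P, frobSq_cross]
  ring

/-- Rewriting D2 in terms of projection matrices. -/
lemma D2_eq_proj {n p q : ℕ} (X : Matrix (Fin n) (Fin p) ℝ) (Y : Matrix (Fin n) (Fin q) ℝ)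
    (hX : hasOrthonormalCols X) (hY : hasOrthonormalCols Y) :
    D2 X Y = Real.sqrt ((frobSq (X * Xᵀ - Y * Yᵀ) + |(p : ℝ) - (q : ℝ)|) / 2) := by
  rw [D2]
  congr 1
  rw [frobSq_proj_sub X Y hX hY]
  rcases le_total (p : ℝ) (q : ℝ) with h | h
  · rw [max_eq_right h, abs_of_nonpos (by linarith)]; ring
  · rw [max_eq_left h, abs_of_nonneg (by linarith)]; ring

/-- mulVec-range facts. -/
lemma proj_fix {n p : ℕ} (X : Matrix (Fin n) (Fin p) ℝ) (hX : hasOrthonormalCols X)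
    (v : Fin n → ℝ) (hv : v ∈ Set.range X.mulVec) : (X * Xᵀ).mulVec v = v := by
  obtain ⟨c, rfl⟩ := hv
  have h1 : Xᵀ.mulVec (X.mulVec c) = c := by
    rw [Matrix.mulVec_mulVec, hX, Matrix.one_mulVec]
  rw [← Matrix.mulVec_mulVec, h1]

lemma range_proj {n p : ℕ} (X : Matrix (Fin n) (Fin p) ℝ) (hX : hasOrthonormalCols X) :
    Set.range X.mulVec = Set.range (X * Xᵀ).mulVec := by
  apply Set.Subset.antisymm
  · rintro v hv
    exact ⟨v, proj_fix X hX v hv⟩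
  · rintro v ⟨w, rfl⟩
    exact ⟨Xᵀ.mulVec w, by rw [Matrix.mulVec_mulVec]⟩

lemma range_eq_iff_proj_eq {n p q : ℕ} (X : Matrix (Fin n) (Fin p) ℝ)
    (Y : Matrix (Fin n) (Fin q) ℝ) (hX : hasOrthonormalCols X) (hY : hasOrthonormalCols Y) :
    Set.range X.mulVec = Set.range Y.mulVec ↔ X * Xᵀ = Y * Yᵀ := by
  constructor
  · intro h
    set P := X * Xᵀ with hPd
    set Q := Y * Yᵀ with hQd
    have hPY : P * Y = Y := by
      ext i j
      have : P.mulVec (Y.mulVec (Pi.single j 1)) = Y.mulVec (Pi.single j 1) :=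
        proj_fix X hX _ (h ▸ ⟨Pi.single j 1, rfl⟩)
      rw [Matrix.mulVec_mulVec] at this
      have := congrFun this i
      simpa [Matrix.mulVec_single] using this
    have hQX : Q * X = X := by
      ext i j
      have : Q.mulVec (X.mulVec (Pi.single j 1)) = X.mulVec (Pi.single j 1) :=
        proj_fix Y hY _ (h ▸ ⟨Pi.single j 1, rfl⟩)
      rw [Matrix.mulVec_mulVec] at this
      have := congrFun this i
      simpa [Matrix.mulVec_single] using this
    have hQP : Q * P = P := by rw [hPd, ← Matrix.mul_assoc, hQX]
    calc P = (Q * P)ᵀ := by rw [hQP, proj_symm]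
    _ = Pᵀ * Qᵀ := by rw [Matrix.transpose_mul]
    _ = P * Q := by rw [proj_symm, proj_symm]
    _ = Q := by rw [hQd, ← Matrix.mul_assoc, hPY]
  · intro h
    rw [range_proj X hX, range_proj Y hY, h]

/-- Frobenius triangle inequality via embedding into Euclidean space. -/
lemma frob_triangle {a b : ℕ} (A B : Matrix (Fin a) (Fin b) ℝ) :
    Real.sqrt (frobSq (A + B)) ≤ Real.sqrt (frobSq A) + Real.sqrt (frobSq B) := by
  let e : Matrix (Fin a) (Fin b) ℝ → EuclideanSpace ℝ (Fin a × Fin b) :=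
    fun M => WithLp.toLp 2 (fun ij : Fin a × Fin b => M ij.1 ij.2)
  have hnorm : ∀ M : Matrix (Fin a) (Fin b) ℝ, ‖e M‖ = Real.sqrt (frobSq M) := by
    intro M
    rw [EuclideanSpace.norm_eq, frobSq_eq_sum']
    congr 1
    rw [Fintype.sum_prod_type, Finset.sum_comm]
    simp [e, Real.norm_eq_abs, sq_abs]
  have : e (A + B) = e A + e B := rfl
  calc Real.sqrt (frobSq (A + B)) = ‖e (A + B)‖ := (hnorm _).symm
  _ = ‖e A + e B‖ := by rw [this]
  _ ≤ ‖e A‖ + ‖e B‖ := norm_add_le _ _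
  _ = _ := by rw [hnorm, hnorm]

/-- Scalar triangle lemma. -/
lemma tri_aux (a b c d e f : ℝ) (ha : 0 ≤ a) (hb : 0 ≤ b) (hc : 0 ≤ c)
    (hd : 0 ≤ d) (he : 0 ≤ e) (hf : 0 ≤ f)
    (h1 : a ≤ b + c) (h2 : d ≤ e + f) :
    Real.sqrt ((a^2 + d)/2) ≤ Real.sqrt ((b^2 + e)/2) + Real.sqrt ((c^2 + f)/2) := by
  set s := Real.sqrt ((b^2 + e)/2) with hs
  set t := Real.sqrt ((c^2 + f)/2) with ht
  have hs0 : 0 ≤ s := Real.sqrt_nonneg _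
  have ht0 : 0 ≤ t := Real.sqrt_nonneg _
  have hs2 : s^2 = (b^2 + e)/2 := Real.sq_sqrt (by positivity)
  have ht2 : t^2 = (c^2 + f)/2 := Real.sq_sqrt (by positivity)
  have hst : b * c / 2 ≤ s * t := by
    have hbc : 0 ≤ b * c / 2 := by positivity
    have : (b * c / 2)^2 ≤ s^2 * t^2 := by
      rw [hs2, ht2]
      nlinarith [mul_nonneg hb hf, mul_nonneg hc he, mul_nonneg he hf, sq_nonneg b, sq_nonneg c,
        mul_nonneg (mul_nonneg hb hb) hf, mul_nonneg (mul_nonneg hc hc) he]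
    nlinarith [mul_nonneg hs0 ht0]
  have key : (a^2 + d)/2 ≤ (s + t)^2 := by
    have ha2 : a^2 ≤ (b + c)^2 := by nlinarith
    nlinarith
  calc Real.sqrt ((a^2 + d)/2) ≤ Real.sqrt ((s + t)^2) := Real.sqrt_le_sqrt key
  _ = s + t := Real.sqrt_sq (by linarith)

end Aux

/-- D₂ is a metric on the set of linear subspaces of ℝⁿ (of dimension ≥ 1),
represented via matrices with orthonormal columns whose column spaces are the subspaces:
nonnegativity, identity of indiscernibles (vanishes iff the subspaces coincide), symmetry,
the triangle inequality, and independence of the choice of orthonormal bases. -/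
theorem D2_is_metric {n : ℕ} :
    (∀ (p q : ℕ), 1 ≤ p → 1 ≤ q →
      ∀ (X : Matrix (Fin n) (Fin p) ℝ) (Y : Matrix (Fin n) (Fin q) ℝ),
        hasOrthonormalCols X → hasOrthonormalCols Y →
          0 ≤ D2 X Y) ∧
    (∀ (p q : ℕ), 1 ≤ p → 1 ≤ q →
      ∀ (X : Matrix (Fin n) (Fin p) ℝ) (Y : Matrix (Fin n) (Fin q) ℝ),
        hasOrthonormalCols X → hasOrthonormalCols Y →
          (D2 X Y = 0 ↔ Set.range X.mulVec = Set.range Y.mulVec)) ∧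
    (∀ (p q : ℕ), 1 ≤ p → 1 ≤ q →
      ∀ (X : Matrix (Fin n) (Fin p) ℝ) (Y : Matrix (Fin n) (Fin q) ℝ),
        hasOrthonormalCols X → hasOrthonormalCols Y →
          D2 X Y = D2 Y X) ∧
    (∀ (p q r : ℕ), 1 ≤ p → 1 ≤ q → 1 ≤ r →
      ∀ (X : Matrix (Fin n) (Fin p) ℝ) (Y : Matrix (Fin n) (Fin q) ℝ)
        (Z : Matrix (Fin n) (Fin r) ℝ),
        hasOrthonormalCols X → hasOrthonormalCols Y → hasOrthonormalCols Z →
          D2 X Y ≤ D2 X Z + D2 Z Y) ∧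
    (∀ (p q : ℕ), 1 ≤ p → 1 ≤ q →
      ∀ (X X' : Matrix (Fin n) (Fin p) ℝ) (Y Y' : Matrix (Fin n) (Fin q) ℝ),
        hasOrthonormalCols X → hasOrthonormalCols X' →
        hasOrthonormalCols Y → hasOrthonormalCols Y' →
        Set.range X.mulVec = Set.range X'.mulVec →
        Set.range Y.mulVec = Set.range Y'.mulVec →
          D2 X Y = D2 X' Y') := by
  refine ⟨?_, ?_, ?_, ?_, ?_⟩
  · intro p q _ _ X Y _ _
    exact Real.sqrt_nonneg _
  · intro p q _ _ X Y hX hY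
    rw [D2_eq_proj X Y hX hY, range_eq_iff_proj_eq X Y hX hY]
    constructor
    · intro h
      have h0 : (frobSq (X * Xᵀ - Y * Yᵀ) + |(p:ℝ) - (q:ℝ)|) / 2 ≤ 0 :=
        Real.sqrt_eq_zero'.mp h
      have h1 := frobSq_nonneg' (X * Xᵀ - Y * Yᵀ)
      have h2 : (0:ℝ) ≤ |(p:ℝ) - (q:ℝ)| := abs_nonneg _
      have h3 : frobSq (X * Xᵀ - Y * Yᵀ) = 0 := by linarith
      have := (frobSq_eq_zero_iff _).mp h3
      exact sub_eq_zero.mp this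
    · intro h
      have hpq : (p:ℝ) = (q:ℝ) := by
        rw [← proj_trace X hX, ← proj_trace Y hY, h]
      have h0 : frobSq (0 : Matrix (Fin n) (Fin n) ℝ) = 0 := (frobSq_eq_zero_iff _).mpr rfl
      rw [h]
      simp [hpq, h0]
  · intro p q _ _ X Y hX hY
    rw [D2, D2, max_comm, show Yᵀ * X = (Xᵀ * Y)ᵀ by
      rw [Matrix.transpose_mul, Matrix.transpose_transpose], frobSq_transpose]
  · intro p q r _ _ _ X Y Z hX hY hZ
    rw [D2_eq_proj X Y hX hY, D2_eq_proj X Z hX hZ, D2_eq_proj Z Y hZ hY]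
    set P := X * Xᵀ
    set Q := Y * Yᵀ
    set R := Z * Zᵀ
    have ha : frobSq (P - Q) = (Real.sqrt (frobSq (P - Q)))^2 :=
      (Real.sq_sqrt (frobSq_nonneg' _)).symm
    have hb : frobSq (P - R) = (Real.sqrt (frobSq (P - R)))^2 :=
      (Real.sq_sqrt (frobSq_nonneg' _)).symm
    have hc : frobSq (R - Q) = (Real.sqrt (frobSq (R - Q)))^2 :=
      (Real.sq_sqrt (frobSq_nonneg' _)).symm
    rw [ha, hb, hc]
    refine tri_aux _ _ _ _ _ _ (Real.sqrt_nonneg _) (Real.sqrt_nonneg _)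
      (Real.sqrt_nonneg _) (abs_nonneg _) (abs_nonneg _) (abs_nonneg _) ?_ ?_
    · have : P - Q = (P - R) + (R - Q) := by abel
      rw [this]
      exact frob_triangle _ _
    · exact abs_sub_le _ _ _
  · intro p q _ _ X X' Y Y' hX hX' hY hY' hXX hYY
    rw [D2_eq_proj X Y hX hY, D2_eq_proj X' Y' hX' hY',
      (range_eq_iff_proj_eq X X' hX hX').mp hXX,
      (range_eq_iff_proj_eq Y Y' hY hY').mp hYY]
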